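/- Let c1, c2 : [0,1] → R^n be two C^2 unit-speed curves with c1(0) = c2(0) = 0 and distinct unit tangent vectors T1 ≠ T2 at 0. Then there exists ξ > 0 such that for all 0 < r < ξ, if e1(r) and e2(r) denote the first intersection points of c1 and c2 with the sphere of radius r, then ‖e1(r) − e2(r)‖ > r². -/

import Mathlib

open Set

/-- Unit-speed curves move at most distance `t` in time `t`. -/
lemma unit_speed_slow {n : ℕ} (c : ℝ → EuclideanSpace ℝ (Fin n))
    (h : ContDiff ℝ 2 c) (h0 : c 0 = 0) (hu : ∀ t, ‖deriv c t‖ = 1) :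
    ∀ t : ℝ, 0 ≤ t → ‖c t‖ ≤ t := by
  intro t ht
  have hdiff : Differentiable ℝ c := h.differentiable (by norm_num)
  have := norm_image_sub_le_of_norm_deriv_le_segment' (a := 0) (b := t)
      (f := c) (f' := deriv c) (C := 1)
      (fun x _ => (hdiff x).hasDerivAt.hasDerivWithinAt)
      (fun x _ => le_of_eq (hu x)) t (right_mem_Icc.mpr ht)
  simpa [h0] using this

/-- Second-order Taylor bound for a `C²` curve with `c 0 = 0`. -/
lemma taylor_bound {n : ℕ} (c : ℝ → EuclideanSpace ℝ (Fin n))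
    (h : ContDiff ℝ 2 c) (h0 : c 0 = 0) :
    ∃ L : ℝ, 1 ≤ L ∧ ∀ t ∈ Icc (0:ℝ) 1, ‖c t - t • deriv c 0‖ ≤ L * t ^ 2 := by
  have hdc : ContDiff ℝ 1 (deriv c) := by
    rw [show (2 : WithTop ℕ∞) = 1 + 1 from rfl] at h
    exact (contDiff_succ_iff_deriv.mp h).2.2
  have hdd : Continuous (deriv (deriv c)) := hdc.continuous_deriv le_rfl
  obtain ⟨M, hM⟩ := (isCompact_Icc (a := (0:ℝ)) (b := 1)).exists_bound_of_continuousOn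
    (hdd.continuousOn (s := Icc 0 1))
  refine ⟨max M 1, le_max_right _ _, ?_⟩
  set L := max M 1 with hLdef
  have hdiff : Differentiable ℝ c := (by
    rw [show (2 : WithTop ℕ∞) = 1 + 1 from rfl] at h
    exact (contDiff_succ_iff_deriv.mp h).1)
  have hdcdiff : Differentiable ℝ (deriv c) := hdc.differentiable (by norm_num)
  -- first: `‖deriv c s - deriv c 0‖ ≤ L * s` on `[0,1]`
  have step1 : ∀ s ∈ Icc (0:ℝ) 1, ‖deriv c s - deriv c 0‖ ≤ L * s := by
    intro s hs
    have := (convex_Icc (0:ℝ) 1).norm_image_sub_le_of_norm_deriv_le (f := deriv c)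
        (C := L) (fun x _ => hdcdiff x)
        (fun x hx => (hM x hx).trans (le_max_left _ _))
        (left_mem_Icc.mpr zero_le_one) hs
    have habs : ‖s - 0‖ = s := by
      rw [sub_zero, Real.norm_eq_abs, abs_of_nonneg hs.1]
    rwa [habs] at this
  intro t ht
  -- second: MVT on `[0,t]` for `g s = c s - s • deriv c 0` with bound `L * t`
  have hg : ∀ x ∈ Icc (0:ℝ) t, HasDerivWithinAt (fun s => c s - s • deriv c 0)
      (deriv c x - deriv c 0) (Icc 0 t) x := by
    intro x _
    exact ((hdiff x).hasDerivAt.sub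
      ((hasDerivAt_id x).smul_const (deriv c 0))).hasDerivWithinAt.congr_deriv (by simp)
  have bound : ∀ x ∈ Ico (0:ℝ) t, ‖deriv c x - deriv c 0‖ ≤ L * t := by
    intro x hx
    have hx1 : x ∈ Icc (0:ℝ) 1 := ⟨hx.1, hx.2.le.trans ht.2⟩
    have := step1 x hx1
    have hL0 : (0:ℝ) ≤ L := le_trans zero_le_one (le_max_right _ _)
    nlinarith [hx.2.le]
  have := norm_image_sub_le_of_norm_deriv_le_segment' hg bound t (right_mem_Icc.mpr ht.1)
  simp only [h0, zero_smul, sub_zero] at this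
  calc ‖c t - t • deriv c 0‖ ≤ L * t * t := by simpa using this
    _ = L * t ^ 2 := by ring

set_option maxHeartbeats 1000000

/-- Two unit-speed `C²` curves starting at the origin with distinct
unit tangent vectors: there is `ξ > 0` so that for `0 < r < ξ` the first intersection
points with the sphere of radius `r` are at distance greater than `r²`. -/
theorem first_sphere_hits_far {n : ℕ} (c₁ c₂ : ℝ → EuclideanSpace ℝ (Fin n))
    (h1 : ContDiff ℝ 2 c₁) (h2 : ContDiff ℝ 2 c₂)
    (h10 : c₁ 0 = 0) (h20 : c₂ 0 = 0)
    (hu1 : ∀ t, ‖deriv c₁ t‖ = 1) (hu2 : ∀ t, ‖deriv c₂ t‖ = 1)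
    (hT : deriv c₁ 0 ≠ deriv c₂ 0) :
    ∃ ξ > (0:ℝ), ∀ r : ℝ, 0 < r → r < ξ →
      (∃ t ≥ (0:ℝ), ‖c₁ t‖ = r) → (∃ t ≥ (0:ℝ), ‖c₂ t‖ = r) →
      ∀ t₁ t₂ : ℝ,
        t₁ = sInf {t : ℝ | 0 ≤ t ∧ ‖c₁ t‖ = r} →
        t₂ = sInf {t : ℝ | 0 ≤ t ∧ ‖c₂ t‖ = r} →
        r ^ 2 < ‖c₁ t₁ - c₂ t₂‖ := by
  obtain ⟨L₁, hL₁, hA₁⟩ := taylor_bound c₁ h1 h10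
  obtain ⟨L₂, hL₂, hA₂⟩ := taylor_bound c₂ h2 h20
  set T₁ := deriv c₁ 0
  set T₂ := deriv c₂ 0
  set L : ℝ := max L₁ L₂ with hLdef
  have hL1 : (1:ℝ) ≤ L := le_trans hL₁ (le_max_left _ _)
  have hL0 : (0:ℝ) < L := lt_of_lt_of_le one_pos hL1
  set d : ℝ := ‖T₁ - T₂‖ with hddef
  have hd : 0 < d := norm_pos_iff.mpr (sub_ne_zero.mpr hT)
  refine ⟨min (d / (9 * L)) (1 / (4 * L)), lt_min (by positivity) (by positivity), ?_⟩
  intro r hr hrξ hex₁ hex₂ t₁ t₂ ht₁def ht₂def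
  have hr9 : 9 * L * r < d := by
    have := lt_of_lt_of_le hrξ (min_le_left _ _)
    rw [lt_div_iff₀ (by positivity)] at this
    linarith
  have hr4 : 4 * L * r < 1 := by
    have := lt_of_lt_of_le hrξ (min_le_right _ _)
    rw [lt_div_iff₀ (by positivity)] at this
    linarith
  have h2r1 : 2 * r ≤ 1 := by nlinarith
  -- generic facts for one curve
  have main : ∀ (c : ℝ → EuclideanSpace ℝ (Fin n)) (Lc : ℝ), ContDiff ℝ 2 c → c 0 = 0 →
      (∀ t, ‖deriv c t‖ = 1) → 1 ≤ Lc → Lc ≤ L →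
      (∀ t ∈ Icc (0:ℝ) 1, ‖c t - t • deriv c 0‖ ≤ Lc * t ^ 2) →
      (∃ t ≥ (0:ℝ), ‖c t‖ = r) →
      ∀ s, s = sInf {t : ℝ | 0 ≤ t ∧ ‖c t‖ = r} →
        r ≤ s ∧ s ≤ 2 * r ∧ ‖c s‖ = r := by
    intro c Lc hc hc0 hcu hLc1 hLcL hTay hex s hsdef
    set S : Set ℝ := {t : ℝ | 0 ≤ t ∧ ‖c t‖ = r} with hSdef
    have hSclosed : IsClosed S := by
      have : S = Ici 0 ∩ (fun t => ‖c t‖) ⁻¹' {r} := by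
        ext x; simp [hSdef]
      rw [this]
      exact isClosed_Ici.inter (isClosed_singleton.preimage hc.continuous.norm)
    have hSne : S.Nonempty := by
      obtain ⟨t, ht, he⟩ := hex; exact ⟨t, ht, he⟩
    have hSbdd : BddBelow S := ⟨0, fun x hx => hx.1⟩
    have hsmem : s ∈ S := hsdef ▸ hSclosed.csInf_mem hSne hSbdd
    have hs0 : 0 ≤ s := hsmem.1
    have hsr : ‖c s‖ = r := hsmem.2
    have hrle : r ≤ s := hsr ▸ unit_speed_slow c hc hc0 hcu s hs0
    -- upper bound via IVT
    have h2rIcc : (2*r) ∈ Icc (0:ℝ) 1 := ⟨by linarith, h2r1⟩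
    have hlow : r ≤ ‖c (2*r)‖ := by
      have htay := hTay (2*r) h2rIcc
      have hnorm : ‖(2*r) • deriv c 0‖ = 2*r := by
        rw [norm_smul, hcu 0, Real.norm_eq_abs, abs_of_nonneg (by linarith), mul_one]
      have tri : ‖(2*r) • deriv c 0‖ - ‖c (2*r) - (2*r) • deriv c 0‖ ≤ ‖c (2*r)‖ := by
        have h' := norm_sub_norm_le ((2*r) • deriv c 0) ((2*r) • deriv c 0 - c (2*r))
        simp only [sub_sub_cancel] at h'
        have h'' := norm_sub_rev ((2*r) • deriv c 0) (c (2*r))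
        linarith
      rw [hnorm] at tri
      nlinarith
    have : ∃ w ∈ Icc (0:ℝ) (2*r), ‖c w‖ = r := by
      have hcont : ContinuousOn (fun t => ‖c t‖) (Icc 0 (2*r)) :=
        hc.continuous.norm.continuousOn
      have := intermediate_value_Icc (by linarith : (0:ℝ) ≤ 2*r) hcont
      have hrmem : r ∈ Icc ‖c 0‖ ‖c (2*r)‖ := by
        constructor
        · simp [hc0]; linarith
        · exact hlow
      obtain ⟨w, hw, hwr⟩ := this hrmem
      exact ⟨w, hw, hwr⟩
    obtain ⟨w, hw, hwr⟩ := this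
    have : s ≤ w := hsdef ▸ csInf_le hSbdd ⟨hw.1, hwr⟩
    exact ⟨hrle, this.trans hw.2, hsr⟩
  obtain ⟨hrt₁, ht₁2r, hc₁r⟩ := main c₁ L₁ h1 h10 hu1 hL₁ (le_max_left _ _) hA₁ hex₁ t₁ ht₁def
  obtain ⟨hrt₂, ht₂2r, hc₂r⟩ := main c₂ L₂ h2 h20 hu2 hL₂ (le_max_right _ _) hA₂ hex₂ t₂ ht₂def
  have ht₁Icc : t₁ ∈ Icc (0:ℝ) 1 := ⟨by linarith, by linarith⟩
  have ht₂Icc : t₂ ∈ Icc (0:ℝ) 1 := ⟨by linarith, by linarith⟩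
  have hB₁ : ‖c₁ t₁ - t₁ • T₁‖ ≤ L * (2*r) ^ 2 := by
    have := hA₁ t₁ ht₁Icc
    have ht₁sq : t₁ ^ 2 ≤ (2*r) ^ 2 := by nlinarith
    nlinarith [le_max_left L₁ L₂]
  have hB₂ : ‖c₂ t₂ - t₂ • T₂‖ ≤ L * (2*r) ^ 2 := by
    have := hA₂ t₂ ht₂Icc
    have ht₂sq : t₂ ^ 2 ≤ (2*r) ^ 2 := by nlinarith
    nlinarith [le_max_right L₁ L₂]
  -- lower bound on the linearized distance
  have hkey : r * d ≤ ‖t₁ • T₁ - t₂ • T₂‖ := by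
    have e1 : ‖t₁ • T₁ - t₂ • T₂‖ ^ 2
        = t₁ ^ 2 + t₂ ^ 2 - 2 * (t₁ * t₂ * (inner ℝ T₁ T₂ : ℝ)) := by
      rw [norm_sub_sq_real, real_inner_smul_left, real_inner_smul_right,
        norm_smul, norm_smul, hu1 0, hu2 0]
      rw [Real.norm_eq_abs, Real.norm_eq_abs,
        abs_of_nonneg (by linarith : (0:ℝ) ≤ t₁), abs_of_nonneg (by linarith : (0:ℝ) ≤ t₂)]
      ring
    have e2 : d ^ 2 = 2 - 2 * (inner ℝ T₁ T₂ : ℝ) := by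
      rw [hddef, norm_sub_sq_real, hu1 0, hu2 0]; ring
    have hip : (inner ℝ T₁ T₂ : ℝ) = 1 - d ^ 2 / 2 := by linarith
    have hprod : r ^ 2 ≤ t₁ * t₂ := by nlinarith
    have hsq : (r * d) ^ 2 ≤ ‖t₁ • T₁ - t₂ • T₂‖ ^ 2 := by
      rw [e1, hip]
      nlinarith [sq_nonneg (t₁ - t₂), mul_le_mul_of_nonneg_right hprod (sq_nonneg d)]
    nlinarith [norm_nonneg (t₁ • T₁ - t₂ • T₂), mul_nonneg hr.le hd.le]
  have tri : ‖t₁ • T₁ - t₂ • T₂‖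
      ≤ ‖c₁ t₁ - c₂ t₂‖ + ‖c₁ t₁ - t₁ • T₁‖ + ‖c₂ t₂ - t₂ • T₂‖ := by
    have heq : t₁ • T₁ - t₂ • T₂
        = (c₁ t₁ - c₂ t₂) + ((t₁ • T₁ - c₁ t₁) + (c₂ t₂ - t₂ • T₂)) := by abel
    calc ‖t₁ • T₁ - t₂ • T₂‖
        ≤ ‖c₁ t₁ - c₂ t₂‖ + ‖(t₁ • T₁ - c₁ t₁) + (c₂ t₂ - t₂ • T₂)‖ := by
          rw [heq]; exact norm_add_le _ _
      _ ≤ ‖c₁ t₁ - c₂ t₂‖ + (‖t₁ • T₁ - c₁ t₁‖ + ‖c₂ t₂ - t₂ • T₂‖) := by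
          gcongr; exact norm_add_le _ _
      _ = ‖c₁ t₁ - c₂ t₂‖ + ‖c₁ t₁ - t₁ • T₁‖ + ‖c₂ t₂ - t₂ • T₂‖ := by
          rw [norm_sub_rev (t₁ • T₁)]; ring
  nlinarith [hkey, tri, hB₁, hB₂]
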